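/- There exist constants C# ≥ 10 and c# > 0 such that the following holds. Let 0 ≤ r₁ ≤ r₂ ≤ r₃ and ρ > 0 be real numbers with R := r₁ + r₂ + r₃ ≥ C#·ρ, let S := r₁² + r₂² + r₃², and let A_ρ be the symmetric 3×3 matrix with all diagonal entries equal to 2S and off-diagonal entries (A_ρ)₁₂ = (R−ρ)·(r₃−r₁−r₂), (A_ρ)₁₃ = (R−ρ)·(r₂−r₃−r₁), (A_ρ)₂₃ = (R−ρ)·(r₁−r₂−r₃). Then for every vector h = (h₁,h₂,h₃) ∈ ℝ³ one has hᵀ·A_ρ·h ≥ c#·ρ·R·(h₁² + h₂² + h₃²); in particular A_ρ is positive definite with smallest eigenvalue at least c#·ρ·R. -/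

import Mathlib

/-- The Anderson–Chow biquadratic identity: the quadratic form `2S|h|² + R·(cross terms)`
is a sum of squares, hence nonnegative for all real `r`, `h`. -/
lemma AC_core (r₁ r₂ r₃ h₁ h₂ h₃ : ℝ) :
    0 ≤ 2*(r₁^2+r₂^2+r₃^2)*(h₁^2+h₂^2+h₃^2)
      + (r₁+r₂+r₃)*(2*(r₃-r₁-r₂)*h₁*h₂ + 2*(r₂-r₃-r₁)*h₁*h₃ + 2*(r₁-r₂-r₃)*h₂*h₃) := by
  nlinarith [sq_nonneg (2*r₁*h₁ - r₁*h₂ - r₁*h₃ - r₂*h₂ + r₂*h₃ + r₃*h₂ - r₃*h₃),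
    sq_nonneg (2*r₂*h₁ - r₁*h₂ - r₁*h₃ - r₂*h₂ + r₂*h₃ - r₃*h₂ + r₃*h₃),
    sq_nonneg (2*r₃*h₁ - r₁*h₂ - r₁*h₃ + r₂*h₂ - r₂*h₃ + r₃*h₂ - r₃*h₃),
    sq_nonneg (r₁*h₂ - r₁*h₃ - r₂*h₂ - r₂*h₃ + r₃*h₂ + r₃*h₃)]

theorem stmt_16 :
    ∃ Csharp : ℝ, 10 ≤ Csharp ∧ ∃ csharp : ℝ, 0 < csharp ∧
      ∀ r₁ r₂ r₃ ρ : ℝ, 0 ≤ r₁ → r₁ ≤ r₂ → r₂ ≤ r₃ → 0 < ρ →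
        Csharp * ρ ≤ r₁ + r₂ + r₃ →
        ∀ A : Matrix (Fin 3) (Fin 3) ℝ,
          A = !![2*(r₁^2+r₂^2+r₃^2), (r₁+r₂+r₃-ρ)*(r₃-r₁-r₂), (r₁+r₂+r₃-ρ)*(r₂-r₃-r₁);
                 (r₁+r₂+r₃-ρ)*(r₃-r₁-r₂), 2*(r₁^2+r₂^2+r₃^2), (r₁+r₂+r₃-ρ)*(r₁-r₂-r₃);
                 (r₁+r₂+r₃-ρ)*(r₂-r₃-r₁), (r₁+r₂+r₃-ρ)*(r₁-r₂-r₃), 2*(r₁^2+r₂^2+r₃^2)] →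
          (∀ h : Fin 3 → ℝ,
            csharp * ρ * (r₁+r₂+r₃) * ((h 0)^2 + (h 1)^2 + (h 2)^2)
              ≤ dotProduct h (A.mulVec h))
          ∧ A.PosDef := by
  refine ⟨10, le_refl _, 2/3, by norm_num, ?_⟩
  intro r₁ r₂ r₃ ρ hr1 h12 h23 hρ hCρ A hA
  have hRpos : 0 < r₁ + r₂ + r₃ := lt_of_lt_of_le (by linarith) hCρ
  have hRρ : 0 ≤ r₁ + r₂ + r₃ - ρ := by linarith
  have h3S : 0 ≤ 3*(r₁^2+r₂^2+r₃^2) - (r₁+r₂+r₃)^2 := by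
    nlinarith [sq_nonneg (r₁-r₂), sq_nonneg (r₁-r₃), sq_nonneg (r₂-r₃)]
  have main : ∀ h : Fin 3 → ℝ,
      2/3 * ρ * (r₁+r₂+r₃) * ((h 0)^2 + (h 1)^2 + (h 2)^2)
        ≤ dotProduct h (A.mulVec h) := by
    intro h
    have hQ : dotProduct h (A.mulVec h)
        = 2*(r₁^2+r₂^2+r₃^2)*((h 0)^2+(h 1)^2+(h 2)^2)
          + (r₁+r₂+r₃-ρ)*(2*(r₃-r₁-r₂)*(h 0)*(h 1) + 2*(r₂-r₃-r₁)*(h 0)*(h 2)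
              + 2*(r₁-r₂-r₃)*(h 1)*(h 2)) := by
      subst hA
      simp [dotProduct, Matrix.mulVec, Fin.sum_univ_three]
      ring
    rw [hQ]
    have hq0 := AC_core r₁ r₂ r₃ (h 0) (h 1) (h 2)
    have hH : 0 ≤ (h 0)^2 + (h 1)^2 + (h 2)^2 := by positivity
    rw [← mul_le_mul_iff_right₀ hRpos]
    have key : (r₁+r₂+r₃) *
        (2*(r₁^2+r₂^2+r₃^2)*((h 0)^2+(h 1)^2+(h 2)^2)
          + (r₁+r₂+r₃-ρ)*(2*(r₃-r₁-r₂)*(h 0)*(h 1) + 2*(r₂-r₃-r₁)*(h 0)*(h 2)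
              + 2*(r₁-r₂-r₃)*(h 1)*(h 2)))
        - (r₁+r₂+r₃) * (2/3 * ρ * (r₁+r₂+r₃) * ((h 0)^2 + (h 1)^2 + (h 2)^2))
        = (r₁+r₂+r₃-ρ) *
            (2*(r₁^2+r₂^2+r₃^2)*((h 0)^2+(h 1)^2+(h 2)^2)
              + (r₁+r₂+r₃)*(2*(r₃-r₁-r₂)*(h 0)*(h 1) + 2*(r₂-r₃-r₁)*(h 0)*(h 2)
                  + 2*(r₁-r₂-r₃)*(h 1)*(h 2)))
          + 2/3 * ρ * ((h 0)^2 + (h 1)^2 + (h 2)^2)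
              * (3*(r₁^2+r₂^2+r₃^2) - (r₁+r₂+r₃)^2) := by ring
    have t1 := mul_nonneg hRρ hq0
    have t2 := mul_nonneg (mul_nonneg (by linarith : (0:ℝ) ≤ 2/3 * ρ) hH) h3S
    linarith [key, t1, t2]
  refine ⟨main, Matrix.PosDef.of_dotProduct_mulVec_pos ?_ ?_⟩
  · -- IsHermitian
    subst hA
    rw [Matrix.IsHermitian]
    ext i j
    fin_cases i <;> fin_cases j <;> simp [Matrix.conjTranspose_apply]
  · intro x hx
    have hx' : x 0 ≠ 0 ∨ x 1 ≠ 0 ∨ x 2 ≠ 0 := by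
      by_contra hc
      push_neg at hc
      exact hx (funext fun i => by fin_cases i <;> simp [hc.1, hc.2.1, hc.2.2])
    have hH : 0 < (x 0)^2 + (x 1)^2 + (x 2)^2 := by
      rcases hx' with h0 | h1 | h2
      · nlinarith [sq_nonneg (x 1), sq_nonneg (x 2), pow_pos (abs_pos.2 h0) 2, sq_abs (x 0)]
      · nlinarith [sq_nonneg (x 0), sq_nonneg (x 2), pow_pos (abs_pos.2 h1) 2, sq_abs (x 1)]
      · nlinarith [sq_nonneg (x 0), sq_nonneg (x 1), pow_pos (abs_pos.2 h2) 2, sq_abs (x 2)]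
    have hmx := main x
    have hpos : 0 < 2/3 * ρ * (r₁+r₂+r₃) * ((x 0)^2 + (x 1)^2 + (x 2)^2) := by positivity
    have hfin : 0 < dotProduct x (A.mulVec x) := lt_of_lt_of_le hpos hmx
    simpa using hfin
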